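/- Let ℐ ⊆ ℕ be finite and nonempty, let τ ∈ ∏_{i∈ℐ}[2^i], and let A = [τ] = {f ∈ 𝒯 : ∀ i ∈ ℐ, f(i) = τ(i)}. For every finite X ⊆ 𝒟 that is a proper cover of A there exist a nonempty J ⊆ ℐ and an (ℐ, τ, J)-spike S such that w(|J|) ≤ w(X), where w(X) is the sum of the third coordinates of the members of X; moreover S covers A. -/

import Mathlib

noncomputable section

/-- 𝒯 = ∏_{n∈ℕ} [2^n]  (the paper's index `n ∈ {1,2,…}` is the Lean index `n+1`). -/
abbrev Tal : Type := (n : ℕ) → Fin (2 ^ (n + 1))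

/-- `S_{n,τ} = {f ∈ 𝒯 : f(n) ≠ τ}`. -/
def Sset (n : ℕ) (τ : Fin (2 ^ (n + 1))) : Set Tal := {f | f n ≠ τ}

/-- The 𝒟-set `⋂_{n ∈ I} S_{n, t n}` with (nonempty, finite) index set `I`;
only the values of `t` on `I` matter. -/
def DSet (I : Finset ℕ) (t : (n : ℕ) → Fin (2 ^ (n + 1))) : Set Tal :=
  {f | ∀ n ∈ I, f n ≠ t n}

/-- `η(k) = 2^{2500 k⁴}`. -/
def ηT (k : ℕ) : ℕ := 2 ^ (2500 * k ^ 4)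

/-- `α(k) = (k+5)^{-3}`. -/
def αT (k : ℕ) : ℝ := (((k : ℝ) + 5) ^ 3)⁻¹

/-- `δ(m) = min {n ∈ ℕ : η(n) ≥ m}` (with `ℕ = {1,2,…}`). -/
def δT (m : ℕ) : ℕ := sInf {n : ℕ | 1 ≤ n ∧ m ≤ ηT n}

/-- `w(n) = 2^{-δ(n)} (η(δ(n))/n)^{α(δ(n))}`. -/
def wT (n : ℕ) : ℝ :=
  (2 : ℝ) ^ (-(δT n : ℤ)) * ((ηT (δT n) : ℝ) / (n : ℝ)) ^ (αT (δT n))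

/-- Membership in Talagrand's family 𝒟 for a triple `(X, I, w)`:  for some `k ∈ {1,2,…}`,
`X` is a 𝒟-set with index set `I`, `1 ≤ |I| ≤ η(k)`, and `w = 2^{-k}(η(k)/|I|)^{α(k)}`. -/
def memD (p : Set Tal × Finset ℕ × ℝ) : Prop :=
  ∃ k : ℕ, 1 ≤ k ∧ (∃ t : (n : ℕ) → Fin (2 ^ (n + 1)), p.1 = DSet p.2.1 t) ∧
    p.2.1.Nonempty ∧ p.2.1.card ≤ ηT k ∧
    p.2.2 = (2 : ℝ) ^ (-(k : ℤ)) * ((ηT k : ℝ) / (p.2.1.card : ℝ)) ^ (αT k)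

/-- Talagrand's first pathological submeasure:
`ψ(B) = inf { w(Y) : Y ⊆ 𝒟 finite, B ⊆ ⋃ Y }`. -/
def ψT (B : Set Tal) : ℝ :=
  sInf {r : ℝ | ∃ Y : Finset (Set Tal × Finset ℕ × ℝ), (∀ p ∈ Y, memD p) ∧
    B ⊆ (⋃ p ∈ Y, p.1) ∧ r = ∑ p ∈ Y, p.2.2}

end


noncomputable section
namespace St12
open Real Finset

lemma etaT_pos (k : ℕ) : 0 < ηT k := by unfold ηT; positivity

lemma etaT_cast (k : ℕ) : (ηT k : ℝ) = (2:ℝ) ^ (2500 * k ^ 4) := by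
  unfold ηT; push_cast; ring

lemma etaT_mono : Monotone ηT := fun a b h => by
  unfold ηT; exact Nat.pow_le_pow_right (by norm_num) (by gcongr)

lemma le_etaT_self {m : ℕ} (hm : 1 ≤ m) : m ≤ ηT m := by
  have h1 : m < 2 ^ m := Nat.lt_two_pow_self
  have h2 : (2:ℕ) ^ m ≤ 2 ^ (2500 * m ^ 4) := by
    apply Nat.pow_le_pow_right (by norm_num)
    calc m ≤ m^4 := Nat.le_self_pow (by norm_num) m
      _ ≤ 2500 * m^4 := Nat.le_mul_of_pos_left _ (by norm_num)
  exact le_of_lt (lt_of_lt_of_le h1 h2)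

lemma deltaT_spec {m : ℕ} (hm : 1 ≤ m) : 1 ≤ δT m ∧ m ≤ ηT (δT m) := by
  have hne : {n : ℕ | 1 ≤ n ∧ m ≤ ηT n}.Nonempty := ⟨m, hm, le_etaT_self hm⟩
  exact Nat.sInf_mem hne

lemma deltaT_le {m j : ℕ} (hj : 1 ≤ j) (h : m ≤ ηT j) : δT m ≤ j := Nat.sInf_le ⟨hj, h⟩

lemma alphaT_pos (k : ℕ) : 0 < αT k := by unfold αT; positivity

lemma alphaT_le216 {k : ℕ} (hk : 1 ≤ k) : αT k ≤ (216:ℝ)⁻¹ := by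
  unfold αT
  apply inv_anti₀ (by norm_num)
  have : (6:ℝ) ≤ (k:ℝ) + 5 := by
    have : (1:ℝ) ≤ (k:ℝ) := by exact_mod_cast hk
    linarith
  calc (216:ℝ) = 6^3 := by norm_num
    _ ≤ ((k:ℝ)+5)^3 := pow_le_pow_left₀ (by norm_num) this 3

lemma alphaT_anti {d k : ℕ} (h : d ≤ k) : αT k ≤ αT d := by
  unfold αT
  apply inv_anti₀ (by positivity)
  have : (d:ℝ) ≤ (k:ℝ) := by exact_mod_cast h
  exact pow_le_pow_left₀ (by positivity) (by linarith) 3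

lemma weight_pos (k n : ℕ) (hn : 0 < n) :
    0 < (2:ℝ) ^ (-(k:ℤ)) * ((ηT k : ℝ) / (n:ℝ)) ^ (αT k) := by
  have h1 : (0:ℝ) < (ηT k : ℝ) := by exact_mod_cast etaT_pos k
  have h2 : (0:ℝ) < (n:ℝ) := by exact_mod_cast hn
  exact mul_pos (zpow_pos (by norm_num) _) (Real.rpow_pos_of_pos (div_pos h1 h2) _)

lemma wT_pos {m : ℕ} (hm : 1 ≤ m) : 0 < wT m := weight_pos _ _ hm

lemma log_etaT (k : ℕ) : Real.log (ηT k : ℝ) = 2500 * (k:ℝ)^4 * Real.log 2 := by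
  rw [etaT_cast, Real.log_pow]; push_cast; ring

lemma log_weight (k n : ℕ) (hn : 1 ≤ n) :
    Real.log ((2:ℝ) ^ (-(k:ℤ)) * ((ηT k : ℝ) / (n:ℝ)) ^ (αT k))
      = (-(k:ℝ) + 2500 * (k:ℝ)^4 * αT k) * Real.log 2 - Real.log n * αT k := by
  have h1 : (0:ℝ) < (ηT k : ℝ) := by exact_mod_cast etaT_pos k
  have h2 : (0:ℝ) < (n:ℝ) := by exact_mod_cast hn
  have hz : ((2:ℝ) ^ (-(k:ℤ))) ≠ 0 := ne_of_gt (zpow_pos (by norm_num) _)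
  have hr : (((ηT k : ℝ) / (n:ℝ)) ^ (αT k)) ≠ 0 :=
    ne_of_gt (Real.rpow_pos_of_pos (div_pos h1 h2) _)
  rw [Real.log_mul hz hr, Real.log_zpow, Real.log_rpow (div_pos h1 h2),
    Real.log_div (ne_of_gt h1) (ne_of_gt h2), log_etaT]
  push_cast
  ring

lemma gap (j : ℕ) :
    2 + 2500 * (j:ℝ)^4 / ((j:ℝ)+5)^3 ≤ 2500 * ((j:ℝ)+1)^4 / ((j:ℝ)+6)^3 := by
  have h5 : (0:ℝ) < ((j:ℝ)+5)^3 := by positivity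
  have h6 : (0:ℝ) < ((j:ℝ)+6)^3 := by positivity
  have hj : (0:ℝ) ≤ (j:ℝ) := Nat.cast_nonneg j
  have e1 : 2 + 2500 * (j:ℝ)^4 / ((j:ℝ)+5)^3
      = (2 * ((j:ℝ)+5)^3 + 2500 * (j:ℝ)^4) / ((j:ℝ)+5)^3 := by field_simp
  rw [e1, div_le_div_iff₀ h5 h6]
  nlinarith [pow_nonneg hj 2, pow_nonneg hj 3, pow_nonneg hj 4, pow_nonneg hj 5,
    pow_nonneg hj 6, pow_nonneg hj 7, hj]

lemma gapα (j : ℕ) :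
    2 + 2500 * (j:ℝ)^4 * αT j ≤ 2500 * ((j:ℝ)+1)^4 * αT (j+1) := by
  have h := gap j
  unfold αT
  push_cast
  have e6 : ((j:ℝ)+1+5) = (j:ℝ)+6 := by ring
  rw [e6, ← div_eq_mul_inv, ← div_eq_mul_inv]
  exact h

lemma gap_sumα {d k : ℕ} (h : d ≤ k) :
    2 * ((k:ℝ) - (d:ℝ)) ≤ 2500 * ((k:ℝ)^4 * αT k - (d:ℝ)^4 * αT d) := by
  induction k, h using Nat.le_induction with
  | base => norm_num
  | succ j hj ih =>
    have hg := gapα j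
    push_cast
    linarith

lemma wstep (n j : ℕ) (hn : 1 ≤ n) (hη : n ≤ ηT j) :
    (2:ℝ) ^ (-(j:ℤ)) * ((ηT j : ℝ) / (n:ℝ)) ^ (αT j)
      ≤ (2:ℝ) ^ (-((j+1:ℕ):ℤ)) * ((ηT (j+1) : ℝ) / (n:ℝ)) ^ (αT (j+1)) := by
  rw [← Real.log_le_log_iff (weight_pos j n hn) (weight_pos (j+1) n hn),
    log_weight j n hn, log_weight (j+1) n hn]
  have L2 : (0:ℝ) < Real.log 2 := Real.log_pos (by norm_num)
  have hlogn : (0:ℝ) ≤ Real.log n := Real.log_natCast_nonneg n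
  have hG : (2 + 2500 * (j:ℝ)^4 * αT j) * Real.log 2
      ≤ (2500 * ((j:ℝ)+1)^4 * αT (j+1)) * Real.log 2 :=
    mul_le_mul_of_nonneg_right (gapα j) L2.le
  have hT : Real.log n * αT (j+1) ≤ Real.log n * αT j :=
    mul_le_mul_of_nonneg_left (alphaT_anti (Nat.le_succ j)) hlogn
  push_cast
  nlinarith [hG, hT]

lemma weight_lb {n k : ℕ} (hn : 1 ≤ n) (h : n ≤ ηT k) (hk : 1 ≤ k) :
    wT n ≤ (2:ℝ) ^ (-(k:ℤ)) * ((ηT k : ℝ) / (n:ℝ)) ^ (αT k) := by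
  have hδ := deltaT_spec hn
  have hδk : δT n ≤ k := deltaT_le hk h
  clear h hk
  induction k, hδk using Nat.le_induction with
  | base => exact le_of_eq rfl
  | succ j hj ih =>
    exact le_trans ih (wstep n j hn (le_trans hδ.2 (etaT_mono hj)))

end St12
end

noncomputable section
namespace St12
open Real Finset

lemma crux {m mp k : ℕ} (hm : 1 ≤ m) (hmp : m < mp) (hub : mp ≤ ηT k) (hk : 1 ≤ k) :
    Real.log (wT m / ((2:ℝ) ^ (-(k:ℤ)) * ((ηT k : ℝ) / (mp:ℝ)) ^ (αT k)))
      ≤ ((mp:ℝ) - (m:ℝ)) * (((2:ℝ) ^ (-(k:ℤ)) * ((ηT k : ℝ) / (mp:ℝ)) ^ (αT k)) / wT m) := by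
  have hmp1 : 1 ≤ mp := le_trans hm hmp.le
  have hδ := deltaT_spec hm
  set δ := δT m with hδdef
  have hδk : δ ≤ k := deltaT_le hk (le_trans hmp.le hub)
  clear_value δ
  have hW : 0 < wT m := wT_pos hm
  set w := (2:ℝ) ^ (-(k:ℤ)) * ((ηT k : ℝ) / (mp:ℝ)) ^ (αT k) with hwdef
  have hw : 0 < w := weight_pos k mp hmp1
  clear_value w
  have hmR : (0:ℝ) < (m:ℝ) := by exact_mod_cast hm
  have hmpR : (0:ℝ) < (mp:ℝ) := by exact_mod_cast hmp1
  have hd1 : (1:ℝ) ≤ (mp:ℝ) - (m:ℝ) := by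
    have : (m:ℝ) + 1 ≤ (mp:ℝ) := by exact_mod_cast hmp
    linarith
  have hm1 : (1:ℝ) ≤ (m:ℝ) := by exact_mod_cast hm
  have hx0 : (0:ℝ) < (mp:ℝ)/(m:ℝ) := div_pos hmpR hmR
  have hx1 : (1:ℝ) ≤ (mp:ℝ)/(m:ℝ) := (one_le_div hmR).mpr (by exact_mod_cast hmp.le)
  rcases eq_or_lt_of_le hδk with he | hlt
  · -- k = δT m
    have hηk : (0:ℝ) < (ηT k : ℝ) := by exact_mod_cast etaT_pos k
    have hWdef' : wT m = (2:ℝ)^(-(k:ℤ)) * ((ηT k:ℝ)/(m:ℝ))^(αT k) := by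
      unfold wT; rw [← hδdef, he]
    have hWw : wT m / w = ((mp:ℝ)/(m:ℝ)) ^ (αT k) := by
      rw [hWdef', hwdef,
        mul_div_mul_left _ _ (ne_of_gt (zpow_pos (by norm_num : (0:ℝ) < 2) _)),
        ← Real.div_rpow (by positivity) (by positivity)]
      congr 1
      field_simp
    have hwW : w / wT m = (((mp:ℝ)/(m:ℝ)) ^ (αT k))⁻¹ := by
      rw [← hWw, inv_div]
    rw [hWw, hwW, Real.log_rpow hx0]
    set x := (mp:ℝ)/(m:ℝ) with hxdef
    set q := x ^ ((216:ℝ)⁻¹) with hqdef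
    have hq1 : 1 ≤ q := Real.one_le_rpow hx1 (by norm_num)
    have hq216 : q ^ (216:ℕ) = x := by
      rw [hqdef, ← Real.rpow_natCast (x ^ ((216:ℝ)⁻¹)) 216, ← Real.rpow_mul hx0.le]
      norm_num
    have hlogq : Real.log q = (216:ℝ)⁻¹ * Real.log x := Real.log_rpow hx0 _
    have hxa : x ^ (αT k) ≤ q := Real.rpow_le_rpow_of_exponent_le hx1 (alphaT_le216 hk)
    have hxap : 0 < x ^ (αT k) := Real.rpow_pos_of_pos hx0 _
    have hlx : 0 ≤ Real.log x := Real.log_nonneg hx1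
    have key : αT k * Real.log x * (x ^ (αT k)) ≤ (mp:ℝ) - (m:ℝ) := by
      have s1 : αT k * Real.log x * (x ^ (αT k)) ≤ (216:ℝ)⁻¹ * Real.log x * q := by
        apply mul_le_mul (mul_le_mul_of_nonneg_right (alphaT_le216 hk) hlx) hxa hxap.le
        positivity
      have s2 : (216:ℝ)⁻¹ * Real.log x * q = q * Real.log q := by rw [hlogq]; ring
      have s3 : q * Real.log q ≤ q * (q - 1) :=
        mul_le_mul_of_nonneg_left (Real.log_le_sub_one_of_pos (by linarith)) (by linarith)
      have s4 : q * (q - 1) ≤ x - 1 := by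
        have h2 : q^(2:ℕ) ≤ q^(216:ℕ) := pow_le_pow_right₀ hq1 (by norm_num)
        have e2 : q * (q - 1) = q^(2:ℕ) - q := by ring
        rw [e2, ← hq216]
        linarith [h2, hq1]
      have s5 : x - 1 ≤ (mp:ℝ) - (m:ℝ) := by
        have e : x - 1 = ((mp:ℝ) - (m:ℝ))/(m:ℝ) := by
          rw [hxdef]; field_simp
        rw [e]
        exact div_le_self (by linarith) hm1
      linarith
    rw [← div_eq_mul_inv, le_div_iff₀ hxap]
    exact key
  · -- δT m < k
    set r := w / wT m with hrdef
    have hr0 : 0 < r := div_pos hw hW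
    clear_value r
    have hk1R : (1:ℝ) ≤ (k:ℝ) - (δ:ℝ) := by
      have : (δ:ℝ) + 1 ≤ (k:ℝ) := by exact_mod_cast hlt
      linarith
    have L2 : (0:ℝ) < Real.log 2 := Real.log_pos (by norm_num)
    have hld : 0 ≤ Real.log ((mp:ℝ)-(m:ℝ)) := Real.log_nonneg hd1
    have key : 2 ≤ ((mp:ℝ) - (m:ℝ)) * r ^ ((3:ℝ)/2) := by
      have hrp : 0 < r ^ ((3:ℝ)/2) := Real.rpow_pos_of_pos hr0 _
      rw [← Real.log_le_log_iff (by norm_num) (by positivity),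
        Real.log_mul (by linarith) (ne_of_gt hrp), Real.log_rpow hr0]
      have hlogr : Real.log r = ((-(k:ℝ) + 2500*(k:ℝ)^4*αT k) * Real.log 2 - Real.log mp * αT k)
          - ((-(δ:ℝ) + 2500*(δ:ℝ)^4*αT δ) * Real.log 2 - Real.log m * αT δ) := by
        have hWform : wT m = (2:ℝ)^(-(δ:ℤ)) * ((ηT δ:ℝ)/(m:ℝ))^(αT δ) := by
          unfold wT; rw [← hδdef]
        rw [hrdef, Real.log_div (ne_of_gt hw) (ne_of_gt hW), hwdef, log_weight k mp hmp1,
          hWform, log_weight δ m hm]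
      rw [hlogr]
      have F1 : 2*((k:ℝ) - (δ:ℝ)) * Real.log 2
          ≤ 2500*((k:ℝ)^4*αT k - (δ:ℝ)^4*αT δ) * Real.log 2 :=
        mul_le_mul_of_nonneg_right (gap_sumα hδk) L2.le
      have hlm : 0 ≤ Real.log m := Real.log_natCast_nonneg m
      have hlmmp : Real.log m ≤ Real.log mp :=
        (Real.log_le_log_iff hmR hmpR).mpr (by exact_mod_cast hmp.le)
      have F2 : Real.log m * αT k ≤ Real.log m * αT δ :=
        mul_le_mul_of_nonneg_left (alphaT_anti hδk) hlm
      have F3 : Real.log mp - Real.log m ≤ Real.log 2 + Real.log ((mp:ℝ)-(m:ℝ)) := by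
        have hmp2 : (mp:ℝ) ≤ 2 * ((mp:ℝ)-(m:ℝ)) * (m:ℝ) := by nlinarith only [hd1, hm1]
        have h4 : Real.log mp ≤ Real.log (2 * ((mp:ℝ)-(m:ℝ)) * (m:ℝ)) :=
          (Real.log_le_log_iff hmpR (by nlinarith only [hd1, hm1])).mpr hmp2
        rw [Real.log_mul (by positivity) (ne_of_gt hmR),
          Real.log_mul (by norm_num) (by linarith)] at h4
        linarith
      have F4 : (Real.log mp - Real.log m) * αT k
          ≤ (Real.log 2 + Real.log ((mp:ℝ)-(m:ℝ))) * (216:ℝ)⁻¹ :=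
        mul_le_mul F3 (alphaT_le216 hk) (alphaT_pos k).le (by positivity)
      have F5 : Real.log 2 ≤ ((k:ℝ)-(δ:ℝ)) * Real.log 2 := by
        have h5 := mul_le_mul_of_nonneg_right hk1R L2.le
        linarith only [h5]
      linarith only [F1, F2, F4, F5, hld, L2]
    have hu0 : 0 < r ^ (-(2:ℝ)⁻¹) := Real.rpow_pos_of_pos hr0 _
    have hlog1 : Real.log (wT m / w) = -Real.log r := by
      rw [show wT m / w = r⁻¹ by rw [hrdef, inv_div], Real.log_inv]
    have h2u : -Real.log r ≤ 2 * r ^ (-(2:ℝ)⁻¹) := by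
      have hl := Real.log_le_sub_one_of_pos hu0
      rw [Real.log_rpow hr0] at hl
      linarith only [hu0, hl]
    have hfin : 2 * r ^ (-(2:ℝ)⁻¹) ≤ ((mp:ℝ)-(m:ℝ)) * r := by
      have e : r ^ ((3:ℝ)/2) * r ^ (-(2:ℝ)⁻¹) = r := by
        rw [← Real.rpow_add hr0]
        norm_num
      calc 2 * r ^ (-(2:ℝ)⁻¹) ≤ (((mp:ℝ)-(m:ℝ)) * r ^ ((3:ℝ)/2)) * r ^ (-(2:ℝ)⁻¹) :=
            mul_le_mul_of_nonneg_right key hu0.le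
        _ = ((mp:ℝ)-(m:ℝ)) * r := by rw [mul_assoc, e]
    rw [hlog1]
    linarith only [h2u, hfin]

end St12
end

noncomputable section
namespace St12
open Real Finset

lemma counting (P : Finset (Set Tal × Finset ℕ × ℝ))
    (E : (Set Tal × Finset ℕ × ℝ) → Finset ℕ)
    (tv : (Set Tal × Finset ℕ × ℝ) → (n : ℕ) → Fin (2 ^ (n + 1)))
    (U : Finset ℕ) (hEU : ∀ p ∈ P, E p ⊆ U)
    (ν : (n : ℕ) → Fin (2 ^ (n + 1)) → ℝ)
    (hν0 : ∀ n v, 0 ≤ ν n v)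
    (hν1 : ∀ n, ∑ v, ν n v = 1)
    (hcov : ∀ g : (i : {x // x ∈ U}) → Fin (2 ^ (i.1 + 1)),
      ∃ p ∈ P, ∀ (n : ℕ) (h : n ∈ U), n ∈ E p → g ⟨n, h⟩ ≠ tv p n) :
    (1:ℝ) ≤ ∑ p ∈ P, ∏ n ∈ E p, (1 - ν n (tv p n)) := by
  classical
  have hW0 : ∀ g : ((i : {x // x ∈ U}) → Fin (2 ^ (i.1 + 1))),
      0 ≤ ∏ i : {x // x ∈ U}, ν i.1 (g i) :=
    fun g => Finset.prod_nonneg fun i _ => hν0 _ _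
  have htot : ∑ g : ((i : {x // x ∈ U}) → Fin (2 ^ (i.1 + 1))),
      ∏ i : {x // x ∈ U}, ν i.1 (g i) = 1 := by
    have h := Finset.prod_univ_sum (fun i : {x // x ∈ U} => (univ : Finset (Fin (2 ^ (i.1 + 1)))))
      (fun i v => ν i.1 v)
    rw [Fintype.piFinset_univ] at h
    rw [← h]
    exact Finset.prod_eq_one fun i _ => hν1 i.1
  set T : (Set Tal × Finset ℕ × ℝ) → Finset ((i : {x // x ∈ U}) → Fin (2 ^ (i.1 + 1))) :=
    fun p => Fintype.piFinset
      (fun i : {x // x ∈ U} => if i.1 ∈ E p then (univ : Finset (Fin (2 ^ (i.1 + 1)))).erase (tv p i.1) else univ)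
    with hT
  have hTsum : ∀ p ∈ P, ∑ g ∈ T p, (∏ i : {x // x ∈ U}, ν i.1 (g i))
      = ∏ n ∈ E p, (1 - ν n (tv p n)) := by
    intro p hp
    rw [hT, ← Finset.prod_univ_sum]
    have step : ∀ i : {x // x ∈ U},
        (∑ v ∈ (if i.1 ∈ E p then (univ : Finset (Fin (2 ^ (i.1 + 1)))).erase (tv p i.1) else univ),
          ν i.1 v)
        = (if i.1 ∈ E p then 1 - ν i.1 (tv p i.1) else 1) := by
      intro i
      by_cases h : i.1 ∈ E p
      · rw [if_pos h, if_pos h, Finset.sum_erase_eq_sub (mem_univ _), hν1 i.1]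
      · rw [if_neg h, if_neg h]; exact hν1 i.1
    calc ∏ i : {x // x ∈ U},
        (∑ v ∈ (if i.1 ∈ E p then (univ : Finset (Fin (2 ^ (i.1 + 1)))).erase (tv p i.1) else univ),
          ν i.1 v)
        = ∏ i : {x // x ∈ U}, (if i.1 ∈ E p then 1 - ν i.1 (tv p i.1) else 1) :=
          Finset.prod_congr rfl (fun i _ => step i)
      _ = ∏ n ∈ U, (if n ∈ E p then 1 - ν n (tv p n) else 1) :=
          Finset.prod_coe_sort U (fun n => if n ∈ E p then 1 - ν n (tv p n) else 1)
      _ = ∏ n ∈ U.filter (fun n => n ∈ E p), (1 - ν n (tv p n)) :=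
          (Finset.prod_filter _ _).symm
      _ = ∏ n ∈ E p, (1 - ν n (tv p n)) := by
          congr 1
          ext n
          simp only [Finset.mem_filter]
          exact ⟨fun h => h.2, fun h => ⟨hEU p hp h, h⟩⟩
  have hmemT : ∀ g : ((i : {x // x ∈ U}) → Fin (2 ^ (i.1 + 1))), ∃ p ∈ P, g ∈ T p := by
    intro g
    obtain ⟨p, hp, h⟩ := hcov g
    refine ⟨p, hp, ?_⟩
    rw [hT, Fintype.mem_piFinset]
    intro i
    by_cases hi : i.1 ∈ E p
    · rw [if_pos hi]
      refine Finset.mem_erase.mpr ⟨?_, mem_univ _⟩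
      have := h i.1 i.2 hi
      simpa using this
    · rw [if_neg hi]; exact mem_univ _
  calc (1:ℝ) = ∑ g : ((i : {x // x ∈ U}) → Fin (2 ^ (i.1 + 1))),
        ∏ i : {x // x ∈ U}, ν i.1 (g i) := htot.symm
    _ ≤ ∑ g : ((i : {x // x ∈ U}) → Fin (2 ^ (i.1 + 1))),
        ∑ p ∈ P, (if g ∈ T p then ∏ i : {x // x ∈ U}, ν i.1 (g i) else 0) := by
        apply Finset.sum_le_sum
        intro g _
        obtain ⟨p, hp, hg⟩ := hmemT g
        have h2 := Finset.single_le_sum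
          (f := fun q => if g ∈ T q then (∏ i : {x // x ∈ U}, ν i.1 (g i)) else 0)
          (fun q _ => by
            by_cases hgq : g ∈ T q
            · rw [if_pos hgq]; exact hW0 g
            · rw [if_neg hgq]) hp
        rwa [if_pos hg] at h2
    _ = ∑ p ∈ P, ∑ g : ((i : {x // x ∈ U}) → Fin (2 ^ (i.1 + 1))),
        (if g ∈ T p then ∏ i : {x // x ∈ U}, ν i.1 (g i) else 0) := Finset.sum_comm
    _ = ∑ p ∈ P, ∑ g ∈ T p, (∏ i : {x // x ∈ U}, ν i.1 (g i)) := by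
        refine Finset.sum_congr rfl (fun p _ => ?_)
        rw [Finset.sum_ite_mem, Finset.univ_inter]
    _ = ∑ p ∈ P, ∏ n ∈ E p, (1 - ν n (tv p n)) := Finset.sum_congr rfl hTsum

end St12
end

/-- For every finite `X ⊆ 𝒟` that properly covers `A = [τ]` there exist a
nonempty `J ⊆ ℐ` and an `(ℐ, τ, J)`-spike `S = ⋂_{j∈J} S_{j,t(j)}` (with `t(j) ≠ τ(j)` on
`J`) whose weight `w(|J|)` is at most the weight of `X`; moreover `S` covers `A`. -/
theorem statement12 (ℐ : Finset ℕ) (hℐ : ℐ.Nonempty)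
    (τ : (n : ℕ) → Fin (2 ^ (n + 1)))
    (X : Finset (Set Tal × Finset ℕ × ℝ))
    (hD : ∀ p ∈ X, memD p)
    (hcover : {f : Tal | ∀ i ∈ ℐ, f i = τ i} ⊆ ⋃ p ∈ X, p.1)
    (hproper : ∀ Y ⊆ X, Y ≠ X →
      ¬ ({f : Tal | ∀ i ∈ ℐ, f i = τ i} ⊆ ⋃ p ∈ Y, p.1)) :
    ∃ J : Finset ℕ, J ⊆ ℐ ∧ J.Nonempty ∧
      ∃ t : (n : ℕ) → Fin (2 ^ (n + 1)),
        (∀ j ∈ J, t j ≠ τ j) ∧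
        wT J.card ≤ ∑ p ∈ X, p.2.2 ∧
        {f : Tal | ∀ i ∈ ℐ, f i = τ i} ⊆ DSet J t := by
  classical
  clear hproper
  have hpow0 : ∀ n : ℕ, 0 < 2 ^ (n + 1) := fun n => by positivity
  have hpow1 : ∀ n : ℕ, 1 < 2 ^ (n + 1) := fun n => Nat.one_lt_two_pow_iff.mpr (by omega)
  set flip : (n : ℕ) → Fin (2 ^ (n + 1)) := fun n =>
    if τ n = ⟨0, hpow0 n⟩ then ⟨1, hpow1 n⟩ else ⟨0, hpow0 n⟩ with hflipdef
  have hflip : ∀ n, flip n ≠ τ n := by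
    intro n
    rw [hflipdef]
    dsimp only
    by_cases h : τ n = ⟨0, hpow0 n⟩
    · rw [if_pos h, h]
      simp [Fin.ext_iff]
    · rw [if_neg h]
      exact fun hc => h hc.symm
  have hcovDS : ∀ J, J ⊆ ℐ → {f : Tal | ∀ i ∈ ℐ, f i = τ i} ⊆ DSet J flip := by
    intro J hJ f hf n hn
    have : f n = τ n := hf n (hJ hn)
    rw [this]
    exact (hflip n).symm
  have hDall : ∀ p : Set Tal × Finset ℕ × ℝ, ∃ k : ℕ, ∃ t : (n : ℕ) → Fin (2 ^ (n + 1)),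
      p ∈ X → (1 ≤ k ∧ p.1 = DSet p.2.1 t ∧ p.2.1.Nonempty ∧ p.2.1.card ≤ ηT k ∧
        p.2.2 = (2:ℝ) ^ (-(k:ℤ)) * ((ηT k : ℝ) / (p.2.1.card : ℝ)) ^ (αT k)) := by
    intro p
    by_cases hp : p ∈ X
    · obtain ⟨k, hk1, ⟨t, ht⟩, h3, h4, h5⟩ := hD p hp
      exact ⟨k, t, fun _ => ⟨hk1, ht, h3, h4, h5⟩⟩
    · exact ⟨1, fun n => ⟨0, hpow0 n⟩, fun h => absurd h hp⟩
  choose kc tc hKT using hDall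
  have wpos : ∀ p ∈ X, 0 < p.2.2 := by
    intro p hp
    obtain ⟨hk1, ht, hne, hcard, hw⟩ := hKT p hp
    rw [hw]
    exact St12.weight_pos _ _ hne.card_pos
  have hwleS : ∀ p ∈ X, p.2.2 ≤ ∑ q ∈ X, q.2.2 := fun p hp =>
    Finset.single_le_sum (fun q hq => (wpos q hq).le) hp
  by_cases hsmall : ∃ p ∈ X, p.2.1.card ≤ ℐ.card
  · obtain ⟨p, hp, hple⟩ := hsmall
    obtain ⟨hk1, ht, hne, hcard, hw⟩ := hKT p hp
    obtain ⟨J, hJsub, hJcard⟩ := Finset.exists_subset_card_eq hple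
    refine ⟨J, hJsub, ?_, flip, fun j _ => hflip j, ?_, hcovDS J hJsub⟩
    · rw [← Finset.card_pos, hJcard]
      exact hne.card_pos
    · rw [hJcard]
      calc wT p.2.1.card ≤ p.2.2 := by
            rw [hw]; exact St12.weight_lb hne.card_pos hcard hk1
        _ ≤ ∑ q ∈ X, q.2.2 := hwleS p hp
  · push_neg at hsmall
    by_cases hWS : wT ℐ.card ≤ ∑ p ∈ X, p.2.2
    · exact ⟨ℐ, Finset.Subset.refl ℐ, hℐ, flip, fun j _ => hflip j, hWS,
        hcovDS ℐ (Finset.Subset.refl ℐ)⟩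
    · exfalso
      push_neg at hWS
      have hm1 : 1 ≤ ℐ.card := hℐ.card_pos
      have hW : 0 < wT ℐ.card := St12.wT_pos hm1
      set A := {f : Tal | ∀ i ∈ ℐ, f i = τ i} with hA
      set X' := X.filter (fun p => ∃ f ∈ A, f ∈ p.1) with hX'
      have hX'X : X' ⊆ X := Finset.filter_subset _ _
      set E : (Set Tal × Finset ℕ × ℝ) → Finset ℕ := fun p => p.2.1 \ ℐ with hE
      set U := X'.sup E with hU
      have hEU : ∀ p ∈ X', E p ⊆ U := fun p hp => Finset.le_sup (f := E) hp
      have hUI : ∀ n ∈ U, n ∉ ℐ := by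
        intro n hn
        rw [hU, Finset.mem_sup] at hn
        obtain ⟨p, hp, hnp⟩ := hn
        exact (Finset.mem_sdiff.mp hnp).2
      have hfacts : ∀ p ∈ X', 0 < p.2.2 ∧ 1 ≤ (E p).card ∧
          Real.log (wT ℐ.card / p.2.2) / ((E p).card : ℝ) ≤ p.2.2 / wT ℐ.card := by
        intro p hp'
        have hp := hX'X hp'
        obtain ⟨hk1, ht, hne, hcard, hw⟩ := hKT p hp
        have hmlt : ℐ.card < p.2.1.card := hsmall p hp
        have hwp : 0 < p.2.2 := wpos p hp
        have hnotsub : ¬ p.2.1 ⊆ ℐ := fun hsub =>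
          absurd (Finset.card_le_card hsub) (not_le.mpr hmlt)
        have hEne : (E p).Nonempty := Finset.sdiff_nonempty.mpr hnotsub
        have hE1 : 1 ≤ (E p).card := hEne.card_pos
        have hEd : (p.2.1.card - ℐ.card : ℕ) ≤ (E p).card := Finset.le_card_sdiff ℐ p.2.1
        have hcrux := St12.crux hm1 hmlt hcard hk1
        rw [← hw] at hcrux
        refine ⟨hwp, hE1, ?_⟩
        have hEcR : (0:ℝ) < ((E p).card : ℝ) := by exact_mod_cast hE1
        rw [div_le_iff₀ hEcR]
        have hdE : ((p.2.1.card : ℝ) - (ℐ.card : ℝ)) ≤ ((E p).card : ℝ) := by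
          have h2 : ((p.2.1.card - ℐ.card : ℕ) : ℝ) = (p.2.1.card : ℝ) - (ℐ.card : ℝ) :=
            Nat.cast_sub hmlt.le
          rw [← h2]
          exact_mod_cast hEd
        have hwW : 0 ≤ p.2.2 / wT ℐ.card := (div_pos hwp hW).le
        calc Real.log (wT ℐ.card / p.2.2)
            ≤ ((p.2.1.card : ℝ) - (ℐ.card : ℝ)) * (p.2.2 / wT ℐ.card) := hcrux
          _ ≤ ((E p).card : ℝ) * (p.2.2 / wT ℐ.card) := mul_le_mul_of_nonneg_right hdE hwW
          _ = (p.2.2 / wT ℐ.card) * ((E p).card : ℝ) := mul_comm _ _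
      set γ : (Set Tal × Finset ℕ × ℝ) → ℝ :=
        fun p => Real.log (wT ℐ.card / p.2.2) / ((E p).card : ℝ) with hγ
      have hγ0 : ∀ p ∈ X', 0 ≤ γ p := by
        intro p hp'
        have hwp := (hfacts p hp').1
        have h1 : p.2.2 ≤ wT ℐ.card := le_of_lt (lt_of_le_of_lt (hwleS p (hX'X hp')) hWS)
        apply div_nonneg (Real.log_nonneg _) (Nat.cast_nonneg _)
        rw [le_div_iff₀ hwp]
        linarith
      have hγle : ∀ p ∈ X', γ p ≤ p.2.2 / wT ℐ.card := fun p hp' => (hfacts p hp').2.2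
      have hsumlt : ∑ p ∈ X', p.2.2 / wT ℐ.card < 1 := by
        rw [← Finset.sum_div, div_lt_one hW]
        calc ∑ p ∈ X', p.2.2 ≤ ∑ p ∈ X, p.2.2 :=
            Finset.sum_le_sum_of_subset_of_nonneg hX'X (fun p hp _ => (wpos p hp).le)
          _ < wT ℐ.card := hWS
      have hγsum : ∑ p ∈ X', γ p < 1 :=
        lt_of_le_of_lt (Finset.sum_le_sum hγle) hsumlt
      have hsubγ : ∀ s : Finset (Set Tal × Finset ℕ × ℝ), s ⊆ X' →
          0 ≤ ∑ p ∈ s, γ p ∧ ∑ p ∈ s, γ p ≤ ∑ p ∈ X', γ p := by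
        intro s hs
        exact ⟨Finset.sum_nonneg fun p hp => hγ0 p (hs hp),
          Finset.sum_le_sum_of_subset_of_nonneg hs (fun p hp _ => hγ0 p hp)⟩
      set ν : (n : ℕ) → Fin (2 ^ (n + 1)) → ℝ := fun n v =>
        (if v = (⟨0, hpow0 n⟩ : Fin (2 ^ (n + 1))) then
          1 - ∑ p ∈ X'.filter (fun p => n ∈ E p), γ p else 0)
        + ∑ p ∈ (X'.filter (fun p => n ∈ E p)).filter (fun p => tc p n = v), γ p with hν
      have hν0 : ∀ n v, 0 ≤ ν n v := by
        intro n v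
        rw [hν]
        dsimp only
        have h1 := hsubγ (X'.filter (fun p => n ∈ E p)) (Finset.filter_subset _ _)
        have h2 := hsubγ ((X'.filter (fun p => n ∈ E p)).filter (fun p => tc p n = v))
          ((Finset.filter_subset _ _).trans (Finset.filter_subset _ _))
        apply add_nonneg _ h2.1
        split
        · linarith [h1.2, hγsum]
        · exact le_rfl
      have hν1 : ∀ n, ∑ v, ν n v = 1 := by
        intro n
        rw [hν]
        dsimp only
        rw [Finset.sum_add_distrib]
        have h1 : (∑ v : Fin (2 ^ (n + 1)), (if v = (⟨0, hpow0 n⟩ : Fin (2 ^ (n + 1))) then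
            1 - ∑ p ∈ X'.filter (fun p => n ∈ E p), γ p else 0))
            = 1 - ∑ p ∈ X'.filter (fun p => n ∈ E p), γ p := by
          rw [Finset.sum_ite_eq' Finset.univ (⟨0, hpow0 n⟩ : Fin (2 ^ (n + 1)))
            (fun _ => 1 - ∑ p ∈ X'.filter (fun p => n ∈ E p), γ p)]
          rw [if_pos (Finset.mem_univ _)]
        have h2 : (∑ v : Fin (2 ^ (n + 1)),
            ∑ p ∈ (X'.filter (fun p => n ∈ E p)).filter (fun p => tc p n = v), γ p)
            = ∑ p ∈ X'.filter (fun p => n ∈ E p), γ p :=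
          Finset.sum_fiberwise _ (fun p => tc p n) γ
        rw [h1, h2]
        ring
      have hgcov : ∀ g : (i : {x // x ∈ U}) → Fin (2 ^ (i.1 + 1)),
          ∃ p ∈ X', ∀ (n : ℕ) (h : n ∈ U), n ∈ E p → g ⟨n, h⟩ ≠ tc p n := by
        intro g
        set f : Tal := fun n => if h : n ∈ U then g ⟨n, h⟩ else τ n with hf
        have hfA : f ∈ A := by
          rw [hA]
          simp only [Set.mem_setOf_eq]
          intro i hi
          rw [hf]
          dsimp only
          rw [dif_neg (fun hc => hUI i hc hi)]
        have hfc : f ∈ ⋃ p ∈ X, p.1 := hcover hfA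
        simp only [Set.mem_iUnion] at hfc
        obtain ⟨p, hp, hfp⟩ := hfc
        have hp' : p ∈ X' := by
          rw [hX']
          exact Finset.mem_filter.mpr ⟨hp, f, hfA, hfp⟩
        refine ⟨p, hp', ?_⟩
        obtain ⟨hk1, ht, hne, hcard, hw⟩ := hKT p hp
        rw [ht] at hfp
        intro n hUn hEp
        have hnI : n ∈ p.2.1 := (Finset.mem_sdiff.mp hEp).1
        have hneq := hfp n hnI
        rw [hf] at hneq
        dsimp only at hneq
        rw [dif_pos hUn] at hneq
        exact hneq
      have hcount := St12.counting X' E tc U hEU ν hν0 hν1 hgcov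
      have hterm : ∀ p ∈ X', ∏ n ∈ E p, (1 - ν n (tc p n)) ≤ p.2.2 / wT ℐ.card := by
        intro p hp'
        obtain ⟨hwp, hE1, _⟩ := hfacts p hp'
        have hγp0 : 0 ≤ γ p := hγ0 p hp'
        have hγp1 : γ p < 1 :=
          lt_of_le_of_lt (Finset.single_le_sum (fun q hq => hγ0 q hq) hp') hγsum
        have hνub : ∀ n v, ν n v ≤ 1 := by
          intro n v
          have hs := hν1 n
          have hv := Finset.single_le_sum (f := fun v => ν n v) (fun v _ => hν0 n v)
            (Finset.mem_univ v)
          linarith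
        have hνlb : ∀ n ∈ E p, γ p ≤ ν n (tc p n) := by
          intro n hn
          rw [hν]
          dsimp only
          have hmem : p ∈ (X'.filter (fun q => n ∈ E q)).filter (fun q => tc q n = tc p n) := by
            rw [Finset.mem_filter, Finset.mem_filter]
            exact ⟨⟨hp', hn⟩, rfl⟩
          have hsum := Finset.single_le_sum (f := γ)
            (fun q hq => hγ0 q (((Finset.filter_subset _ _).trans (Finset.filter_subset _ _)) hq))
            hmem
          have hite : (0:ℝ) ≤ (if tc p n = (⟨0, hpow0 n⟩ : Fin (2 ^ (n + 1))) then
              1 - ∑ q ∈ X'.filter (fun q => n ∈ E q), γ q else 0) := by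
            split
            · linarith [(hsubγ (X'.filter (fun q => n ∈ E q)) (Finset.filter_subset _ _)).2, hγsum]
            · exact le_rfl
          linarith
        have hstep1 : ∏ n ∈ E p, (1 - ν n (tc p n)) ≤ ∏ n ∈ E p, (1 - γ p) := by
          apply Finset.prod_le_prod
          · intro n hn
            linarith [hνub n (tc p n)]
          · intro n hn
            linarith [hνlb n hn]
        have hstep2 : ∏ n ∈ E p, (1 - γ p) = (1 - γ p) ^ (E p).card := Finset.prod_const _
        have hstep3 : (1 - γ p) ^ (E p).card ≤ Real.exp (-γ p) ^ (E p).card := by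
          apply pow_le_pow_left₀ (by linarith)
          linarith [Real.add_one_le_exp (-γ p)]
        have hstep4 : Real.exp (-γ p) ^ (E p).card = Real.exp (-(((E p).card : ℝ) * γ p)) := by
          rw [← Real.exp_nat_mul]
          congr 1
          ring
        have hEcR : ((E p).card : ℝ) ≠ 0 := Nat.cast_ne_zero.mpr (by omega)
        have hγe : ((E p).card : ℝ) * γ p = Real.log (wT ℐ.card / p.2.2) := by
          rw [hγ]
          dsimp only
          field_simp
        have hstep5 : Real.exp (-(Real.log (wT ℐ.card / p.2.2))) = p.2.2 / wT ℐ.card := by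
          rw [Real.exp_neg, Real.exp_log (div_pos hW hwp), inv_div]
        calc ∏ n ∈ E p, (1 - ν n (tc p n)) ≤ (1 - γ p) ^ (E p).card := by
              rw [← hstep2]; exact hstep1
          _ ≤ Real.exp (-γ p) ^ (E p).card := hstep3
          _ = Real.exp (-(((E p).card : ℝ) * γ p)) := hstep4
          _ = p.2.2 / wT ℐ.card := by rw [hγe]; exact hstep5
      have hfinal : (1:ℝ) ≤ ∑ p ∈ X', p.2.2 / wT ℐ.card :=
        le_trans hcount (Finset.sum_le_sum hterm)
      linarith [hsumlt]
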